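/- Let l ≥ 1 and 0 < b < a. Let (f_n) be a sequence of holomorphic functions on the tube T_a = {λ ∈ ℂ^l : ‖Im λ‖ < a} with sup_n sup_{λ ∈ T_a} |f_n(λ)| < ∞, and suppose f_n converges uniformly on T_a to a function f. Then for every multi-index α ∈ ℕ^l and every integer m ≥ 0, sup_{λ ∈ ℂ^l, ‖Im λ‖ ≤ b} (1 + ‖λ‖²)^m · |∂^α ( exp(−(λ₁² + ⋯ + λ_l²)/2) · (f_n(λ) − f(λ)) )| → 0 as n → ∞, where ∂^α denotes the iterated complex partial derivative in the coordinates λ₁, …, λ_l and ‖λ‖² = |λ₁|² + ⋯ + |λ_l|². -/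

import Mathlib

/-!
STATEMENT 7: if a uniformly bounded sequence of holomorphic functions on the tube
`T_a ⊆ ℂ^l` converges uniformly on `T_a`, then after multiplication by the Gaussian
`exp(−(λ₁² + ⋯ + λ_l²)/2)` the convergence holds in every polynomially weighted
derivative seminorm on the smaller closed tube `{‖Im λ‖ ≤ b}`, `0 < b < a`.
-/

noncomputable section

/-- The open tube domain `T_a = {λ ∈ ℂ^l : ‖Im λ‖ < a}` (Euclidean norm of the
imaginary part). -/
def tube (l : ℕ) (a : ℝ) : Set (Fin l → ℂ) :=
  {lam | Real.sqrt (∑ i, (lam i).im ^ 2) < a}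

/-- The complex partial derivative `∂/∂λᵢ` of a function `F : ℂ^l → ℂ`. -/
def pderivC {l : ℕ} (i : Fin l) (F : (Fin l → ℂ) → ℂ) : (Fin l → ℂ) → ℂ :=
  fun z => fderiv ℂ F z (Pi.single i 1)

/-- The iterated complex partial derivative `∂^α` associated to a multi-index
`α ∈ ℕ^l`: the operator `∂/∂λᵢ` is applied `α i` times for each coordinate `i`. -/
def multiPderiv {l : ℕ} (α : Fin l → ℕ) (F : (Fin l → ℂ) → ℂ) : (Fin l → ℂ) → ℂ :=
  (List.finRange l).foldr (fun i G => (pderivC i)^[α i] G) F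

open Metric Complex Function Finset MeasureTheory intervalIntegral

namespace GW
variable {l : ℕ}

def simm (lam : Fin l → ℂ) : ℝ := ∑ i, (lam i).im ^ 2
def sre (lam : Fin l → ℂ) : ℝ := ∑ i, (lam i).re ^ 2
def timm (lam : Fin l → ℂ) : ℝ := Real.sqrt (simm lam)

lemma simm_nonneg (lam : Fin l → ℂ) : 0 ≤ simm lam :=
  Finset.sum_nonneg fun _ _ => sq_nonneg _

lemma sre_nonneg (lam : Fin l → ℂ) : 0 ≤ sre lam :=
  Finset.sum_nonneg fun _ _ => sq_nonneg _

lemma timm_nonneg (lam : Fin l → ℂ) : 0 ≤ timm lam := Real.sqrt_nonneg _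

lemma sq_timm (lam : Fin l → ℂ) : timm lam ^ 2 = simm lam :=
  Real.sq_sqrt (simm_nonneg lam)

lemma mem_tube {a : ℝ} {lam : Fin l → ℂ} : lam ∈ tube l a ↔ timm lam < a := Iff.rfl

lemma tube_mono {a a' : ℝ} (h : a ≤ a') : tube l a ⊆ tube l a' :=
  fun _ hx => lt_of_lt_of_le hx h

lemma isOpen_tube {a : ℝ} : IsOpen (tube l a) := by
  have hc : Continuous fun lam : Fin l → ℂ => Real.sqrt (∑ i, (lam i).im ^ 2) := by
    apply Real.continuous_sqrt.comp
    exact continuous_finset_sum _ fun i _ =>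
      ((Complex.continuous_im.comp (continuous_apply i)).pow 2)
  exact isOpen_lt hc continuous_const

lemma simm_update (lam : Fin l → ℂ) (i : Fin l) (w : ℂ) :
    simm (Function.update lam i w) = simm lam - (lam i).im ^ 2 + w.im ^ 2 := by
  unfold simm
  have h : ∀ j, (Function.update lam i w j).im ^ 2
      = Function.update (fun j => (lam j).im ^ 2) i (w.im ^ 2) j := by
    intro j
    by_cases hj : j = i
    · subst hj; simp
    · simp [Function.update_apply, hj]
  rw [Finset.sum_congr rfl fun j _ => h j, Finset.sum_update_of_mem (Finset.mem_univ i)]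
  rw [Finset.sdiff_singleton_eq_erase]
  have h2 := Finset.add_sum_erase Finset.univ (fun j => (lam j).im ^ 2) (Finset.mem_univ i)
  beta_reduce at h2 ⊢
  linarith [h2]

lemma sre_update (lam : Fin l → ℂ) (i : Fin l) (w : ℂ) :
    sre (Function.update lam i w) = sre lam - (lam i).re ^ 2 + w.re ^ 2 := by
  unfold sre
  have h : ∀ j, (Function.update lam i w j).re ^ 2
      = Function.update (fun j => (lam j).re ^ 2) i (w.re ^ 2) j := by
    intro j
    by_cases hj : j = i
    · subst hj; simp
    · simp [Function.update_apply, hj]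
  rw [Finset.sum_congr rfl fun j _ => h j, Finset.sum_update_of_mem (Finset.mem_univ i)]
  rw [Finset.sdiff_singleton_eq_erase]
  have h2 := Finset.add_sum_erase Finset.univ (fun j => (lam j).re ^ 2) (Finset.mem_univ i)
  beta_reduce at h2 ⊢
  linarith [h2]

lemma timm_update_le (lam : Fin l → ℂ) (i : Fin l) (w : ℂ) :
    timm (Function.update lam i w) ≤ timm lam + |w.im - (lam i).im| := by
  set s := simm lam with hs
  set y := (lam i).im
  set t := w.im
  have hy2 : y ^ 2 ≤ s := Finset.single_le_sum (fun j _ => sq_nonneg ((lam j).im)) (Finset.mem_univ i)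
  have hs0 : 0 ≤ s := simm_nonneg lam
  have hys : |y| ≤ Real.sqrt s := Real.abs_le_sqrt hy2
  have habs : |t| ≤ |y| + |t - y| := by
    have := abs_sub_abs_le_abs_sub t y
    linarith
  have key : simm (Function.update lam i w) ≤ (Real.sqrt s + |t - y|) ^ 2 := by
    rw [simm_update]
    have h1 : t ^ 2 ≤ (|y| + |t - y|) ^ 2 := by
      have := _root_.sq_abs t
      nlinarith [abs_nonneg t, abs_nonneg y, abs_nonneg (t - y)]
    have h2 : Real.sqrt s ^ 2 = s := Real.sq_sqrt hs0
    nlinarith [_root_.sq_abs y, _root_.sq_abs (t - y), abs_nonneg (t - y), Real.sqrt_nonneg s]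
  calc timm (Function.update lam i w) ≤ Real.sqrt ((Real.sqrt s + |t - y|) ^ 2) :=
        Real.sqrt_le_sqrt key
    _ = Real.sqrt s + |t - y| := Real.sqrt_sq (by positivity)


lemma update_eq_affine (lam : Fin l → ℂ) (i : Fin l) (w : ℂ) :
    Function.update lam i w = lam + (w - lam i) • (Pi.single i 1 : Fin l → ℂ) := by
  funext j
  by_cases hj : j = i
  · subst hj; simp
  · simp [Function.update_apply, hj, Pi.single_apply, Ne.symm hj]

lemma hasDerivAt_slice {g : (Fin l → ℂ) → ℂ} {L : (Fin l → ℂ) →L[ℂ] ℂ}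
    {lam : Fin l → ℂ} {i : Fin l} {w : ℂ}
    (hg : HasFDerivAt g L (Function.update lam i w)) :
    HasDerivAt (fun z : ℂ => g (Function.update lam i z)) (L (Pi.single i 1)) w := by
  have heq : (fun z : ℂ => g (Function.update lam i z))
      = fun z : ℂ => g (lam + (z - lam i) • (Pi.single i 1 : Fin l → ℂ)) := by
    funext z; rw [update_eq_affine]
  rw [heq]
  have hinner : HasDerivAt (fun z : ℂ => lam + (z - lam i) • (Pi.single i 1 : Fin l → ℂ))
      ((Pi.single i 1 : Fin l → ℂ)) w := by
    have h1 : HasDerivAt (fun z : ℂ => z - lam i) 1 w := (hasDerivAt_id w).sub_const (lam i)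
    have h2 := h1.smul_const ((Pi.single i 1 : Fin l → ℂ))
    rw [one_smul] at h2
    exact h2.const_add lam
  have hg' : HasFDerivAt g L (lam + (w - lam i) • (Pi.single i 1 : Fin l → ℂ)) := by
    rwa [← update_eq_affine]
  exact hg'.comp_hasDerivAt w hinner

/-- Core one-variable Cauchy estimate for a coordinate partial derivative. -/
lemma pderiv_bound {U : Set (Fin l → ℂ)} (hU : IsOpen U) {g : (Fin l → ℂ) → ℂ}
    (hg : DifferentiableOn ℂ g U) (lam : Fin l → ℂ) (i : Fin l) {r M : ℝ} (hr : 0 < r)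
    (hmem : ∀ w : ℂ, dist w (lam i) ≤ r → Function.update lam i w ∈ U)
    (hM : ∀ w : ℂ, dist w (lam i) ≤ r → ‖g (Function.update lam i w)‖ ≤ M) :
    ‖pderivC i g lam‖ ≤ M / r := by
  set h : ℂ → ℂ := fun w => g (Function.update lam i w) with hh
  have hdiffAt : ∀ w : ℂ, dist w (lam i) ≤ r → DifferentiableAt ℂ h w := by
    intro w hw
    have hgat : DifferentiableAt ℂ g (Function.update lam i w) :=
      hg.differentiableAt (hU.mem_nhds (hmem w hw))
    exact (hasDerivAt_slice hgat.hasFDerivAt).differentiableAt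
  have hdcl : DiffContOnCl ℂ h (ball (lam i) r) := by
    apply DifferentiableOn.diffContOnCl
    rw [closure_ball _ hr.ne']
    exact fun w hw => (hdiffAt w (by simpa [dist_eq_norm] using hw)).differentiableWithinAt
  have hC : ∀ w ∈ sphere (lam i) r, ‖h w‖ ≤ M := fun w hw => by
    rw [mem_sphere] at hw
    exact hM w hw.le
  have hb := Complex.norm_deriv_le_of_forall_mem_sphere_norm_le hr hdcl hC
  have hlam : Function.update lam i (lam i) = lam := Function.update_eq_self i lam
  have hgat : DifferentiableAt ℂ g lam := by
    have h0 : Function.update lam i (lam i) ∈ U := hmem (lam i) (by simp [hr.le])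
    rw [hlam] at h0
    exact hg.differentiableAt (hU.mem_nhds h0)
  have hda : HasDerivAt h (fderiv ℂ g lam (Pi.single i 1)) (lam i) := by
    have := hasDerivAt_slice (lam := lam) (i := i) (w := lam i)
      (by rw [hlam]; exact hgat.hasFDerivAt)
    exact this
  rw [show pderivC i g lam = deriv h (lam i) from (hda.deriv).symm]
  exact hb

/-- Norm bound on the full Fréchet derivative from coordinatewise Cauchy estimates. -/
lemma fderiv_norm_le {U : Set (Fin l → ℂ)} (hU : IsOpen U) {g : (Fin l → ℂ) → ℂ}
    (hg : DifferentiableOn ℂ g U) {lam : Fin l → ℂ} {r M : ℝ} (hr : 0 < r) (hM0 : 0 ≤ M)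
    (hmem : ∀ (i : Fin l) (w : ℂ), dist w (lam i) ≤ r → Function.update lam i w ∈ U)
    (hM : ∀ (i : Fin l) (w : ℂ), dist w (lam i) ≤ r → ‖g (Function.update lam i w)‖ ≤ M)
    (hlam : lam ∈ U) :
    ‖fderiv ℂ g lam‖ ≤ l * (M / r) := by
  apply ContinuousLinearMap.opNorm_le_bound _ (by positivity)
  intro v
  have hv : v = ∑ j, Pi.single j (v j) := by
    simp [Finset.univ_sum_single]
  have hsingle : ∀ j, Pi.single j (v j) = (v j) • (Pi.single j 1 : Fin l → ℂ) := by
    intro j; funext k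
    by_cases hk : k = j
    · subst hk; simp
    · simp [Pi.single_apply, hk, Ne.symm hk]
  calc ‖fderiv ℂ g lam v‖ = ‖∑ j, (v j) • fderiv ℂ g lam ((Pi.single j 1 : Fin l → ℂ))‖ := by
        conv_lhs => rw [hv]
        rw [map_sum]
        congr 1
        refine Finset.sum_congr rfl fun j _ => ?_
        rw [hsingle j, ContinuousLinearMap.map_smul]
    _ ≤ ∑ j, ‖(v j) • fderiv ℂ g lam ((Pi.single j 1 : Fin l → ℂ))‖ := norm_sum_le _ _
    _ ≤ ∑ j : Fin l, ‖v‖ * (M / r) := by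
        refine Finset.sum_le_sum fun j _ => ?_
        rw [norm_smul]
        have h1 : ‖v j‖ ≤ ‖v‖ := norm_le_pi_norm v j
        have h2 : ‖fderiv ℂ g lam ((Pi.single j 1 : Fin l → ℂ))‖ ≤ M / r :=
          pderiv_bound hU hg lam j hr (hmem j) (hM j)
        exact mul_le_mul h1 h2 (norm_nonneg _) (norm_nonneg _)
    _ = l * (M / r) * ‖v‖ := by
        rw [Finset.sum_const, Finset.card_univ, Fintype.card_fin]; ring
lemma pderivC_differentiableOn {U : Set (Fin l → ℂ)} (hU : IsOpen U) {g : (Fin l → ℂ) → ℂ}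
    (hg : DifferentiableOn ℂ g U) (i : Fin l) :
    DifferentiableOn ℂ (pderivC i g) U := by
  intro z₀ hz₀
  obtain ⟨ε, hε, hball⟩ := Metric.isOpen_iff.mp hU z₀ hz₀
  set r : ℝ := ε / 4 with hrdef
  have hr : 0 < r := by positivity
  have h3r : Metric.closedBall z₀ (3 * r) ⊆ U := fun x hx => by
    apply hball
    rw [mem_closedBall] at hx
    rw [mem_ball]
    have h0 : (0:ℝ) < ε := hε
    have : r = ε / 4 := hrdef
    linarith
  have h2r : Metric.closedBall z₀ (2 * r) ⊆ Metric.closedBall z₀ (3 * r) :=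
    closedBall_subset_closedBall (by linarith)
  obtain ⟨M, hMb⟩ := (isCompact_closedBall z₀ (3 * r)).exists_bound_of_continuousOn
    (hg.continuousOn.mono h3r)
  have hM0 : 0 ≤ M := le_trans (norm_nonneg _) (hMb z₀ (mem_closedBall_self (by positivity)))
  set eI : Fin l → ℂ := Pi.single i 1 with heIdef
  have heI : ‖eI‖ = 1 := by rw [heIdef, Pi.norm_single]; simp
  -- membership helper
  have hmem2 : ∀ z ∈ ball z₀ r, ∀ w : ℂ, ‖w‖ ≤ r → z + w • eI ∈ Metric.closedBall z₀ (2 * r) := by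
    intro z hz w hw
    rw [mem_closedBall, dist_eq_norm]
    have : z + w • eI - z₀ = (z - z₀) + w • eI := by ring
    rw [this]
    refine le_trans (norm_add_le _ _) ?_
    rw [mem_ball, dist_eq_norm] at hz
    have h2 : ‖w • eI‖ = ‖w‖ := by rw [norm_smul, heI, mul_one]
    rw [h2]; linarith
  -- fderiv bound on closedBall z₀ (2r)
  set B : ℝ := l * (M / r) with hBdef
  have hB0 : 0 ≤ B := by positivity
  have hfd : ∀ x ∈ Metric.closedBall z₀ (2 * r), ‖fderiv ℂ g x‖ ≤ B := by
    intro x hx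
    refine fderiv_norm_le hU hg hr hM0 ?_ ?_ (h3r (h2r hx))
    · intro j w hw
      apply h3r
      rw [mem_closedBall]
      rw [dist_pi_le_iff (by positivity)]
      intro k
      by_cases hk : k = j
      · subst hk
        simp only [Function.update_self]
        calc dist w (z₀ k) ≤ dist w (x k) + dist (x k) (z₀ k) := dist_triangle _ _ _
          _ ≤ r + dist x z₀ := by
              gcongr
              exact dist_le_pi_dist x z₀ k
          _ ≤ r + 2 * r := by
              rw [mem_closedBall] at hx; linarith
          _ ≤ 3 * r := by linarith
      · rw [Function.update_of_ne hk]
        calc dist (x k) (z₀ k) ≤ dist x z₀ := dist_le_pi_dist x z₀ k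
          _ ≤ 2 * r := by rw [mem_closedBall] at hx; exact hx
          _ ≤ 3 * r := by linarith
    · intro j w hw
      apply hMb
      rw [mem_closedBall]
      rw [dist_pi_le_iff (by positivity)]
      intro k
      by_cases hk : k = j
      · subst hk
        simp only [Function.update_self]
        calc dist w (z₀ k) ≤ dist w (x k) + dist (x k) (z₀ k) := dist_triangle _ _ _
          _ ≤ r + dist x z₀ := by gcongr; exact dist_le_pi_dist x z₀ k
          _ ≤ 3 * r := by rw [mem_closedBall] at hx; linarith
      · rw [Function.update_of_ne hk]
        calc dist (x k) (z₀ k) ≤ dist x z₀ := dist_le_pi_dist x z₀ k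
          _ ≤ 3 * r := by rw [mem_closedBall] at hx; linarith
  -- translated functions have derivatives
  have htrans : ∀ (w : ℂ), ‖w‖ ≤ r → ∀ x ∈ ball z₀ r,
      HasFDerivAt (fun z => g (z + w • eI)) (fderiv ℂ g (x + w • eI)) x := by
    intro w hw x hx
    have hmemU : x + w • eI ∈ U := h3r (h2r (hmem2 x hx w hw))
    have hgd : HasFDerivAt g (fderiv ℂ g (x + w • eI)) (x + w • eI) :=
      (hg.differentiableAt (hU.mem_nhds hmemU)).hasFDerivAt
    have hid : HasFDerivAt (fun z : Fin l → ℂ => z + w • eI)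
        (ContinuousLinearMap.id ℂ (Fin l → ℂ)) x := (hasFDerivAt_id x).add_const (w • eI)
    have := hgd.comp x hid
    exact this
  -- scalar factor
  set A : ℝ → ℂ := fun θ => deriv (circleMap 0 r) θ * (circleMap 0 r θ) ^ (-2 : ℤ) with hAdef
  have hAnorm : ∀ θ, ‖A θ‖ = 1 / r := by
    intro θ
    rw [hAdef]
    simp only [deriv_circleMap]
    rw [norm_mul, norm_mul, norm_zpow]
    simp only [norm_circleMap_zero, Complex.norm_I, abs_of_pos hr]
    rw [mul_one]
    have hz2 : r ^ (-2 : ℤ) = (r ^ 2)⁻¹ := by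
      rw [zpow_neg, zpow_two, sq]
    rw [hz2, sq, mul_inv, ← mul_assoc, mul_inv_cancel₀ hr.ne', one_mul, one_div]
  -- continuity of A
  have hAcont : Continuous A := by
    rw [hAdef]
    have h1 : Continuous fun θ => deriv (circleMap 0 r) θ := by
      simp only [deriv_circleMap]
      exact (continuous_circleMap 0 r).mul continuous_const
    have h2 : Continuous fun θ => (circleMap 0 r θ) ^ (-2 : ℤ) :=
      (continuous_circleMap 0 r).zpow₀ (-2) fun θ => Or.inl (circleMap_ne_center hr.ne')
    exact h1.mul h2
  set Fb : (Fin l → ℂ) → ℝ → ℂ := fun z θ => A θ * g (z + circleMap 0 r θ • eI) with hFbdef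
  have hwr : ∀ θ : ℝ, ‖circleMap 0 r θ‖ ≤ r := fun θ => by
    rw [norm_circleMap_zero, abs_of_pos hr]
  have hFbcont : ∀ z ∈ ball z₀ r, Continuous (Fb z) := by
    intro z hz
    apply hAcont.mul
    apply (hg.continuousOn.mono (fun x hx => h3r (h2r hx))).comp_continuous
    · exact continuous_const.add ((continuous_circleMap 0 r).smul continuous_const)
    · exact fun θ => hmem2 z hz _ (hwr θ)
  set F' : ℝ → (Fin l → ℂ) →L[ℂ] ℂ :=
    fun θ => A θ • fderiv ℂ g (z₀ + circleMap 0 r θ • eI) with hF'def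
  have hz₀ball : z₀ ∈ ball z₀ r := mem_ball_self hr
  have main := intervalIntegral.hasFDerivAt_integral_of_dominated_loc_of_lip
      (F := Fb) (F' := F') (x₀ := z₀) (a := (0:ℝ)) (b := 2 * Real.pi)
      (bound := fun _ => (1 / r) * B) (μ := MeasureTheory.volume) (s := ball z₀ r) (Metric.ball_mem_nhds z₀ hr)
      (Filter.eventually_of_mem (Metric.ball_mem_nhds z₀ hr)
        (fun x hx => (hFbcont x hx).aestronglyMeasurable))
      ((hFbcont z₀ hz₀ball).intervalIntegrable 0 (2 * Real.pi))
      (by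
        have hT : Continuous fun θ : ℝ => z₀ + circleMap 0 r θ • eI :=
          continuous_const.add ((continuous_circleMap 0 r).smul continuous_const)
        have hmf : Measurable fun θ => fderiv ℂ g (z₀ + circleMap 0 r θ • eI) :=
          (measurable_fderiv ℂ g).comp hT.measurable
        exact AEStronglyMeasurable.smul hAcont.aestronglyMeasurable hmf.aestronglyMeasurable)
      (by
        refine Filter.Eventually.of_forall (fun θ => fun _ => ?_)
        rw [lipschitzOnWith_iff_norm_sub_le]
        intro x hx y hy
        have hw := hwr θ
        have key : ‖g (x + circleMap 0 r θ • eI) - g (y + circleMap 0 r θ • eI)‖ ≤ B * ‖x - y‖ := by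
          refine Convex.norm_image_sub_le_of_norm_hasFDerivWithin_le
            (f := fun z => g (z + circleMap 0 r θ • eI))
            (f' := fun u => fderiv ℂ g (u + circleMap 0 r θ • eI))
            (fun u hu => (htrans _ hw u hu).hasFDerivWithinAt)
            (fun u hu => hfd _ (hmem2 u hu _ hw)) (convex_ball z₀ r) hy hx
        have hcoe : ((Real.nnabs (1 / r * B)) : ℝ) = 1 / r * B := by
          rw [Real.coe_nnabs, _root_.abs_of_nonneg (by positivity)]
        rw [hcoe]
        calc ‖Fb x θ - Fb y θ‖
            = ‖A θ‖ * ‖g (x + circleMap 0 r θ • eI) - g (y + circleMap 0 r θ • eI)‖ := by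
              rw [hFbdef]
              simp only
              rw [← mul_sub, norm_mul]
          _ ≤ (1 / r) * (B * ‖x - y‖) := by
              rw [hAnorm]
              have h1r : (0:ℝ) ≤ 1 / r := by positivity
              exact mul_le_mul_of_nonneg_left key h1r
          _ = 1 / r * B * ‖x - y‖ := by ring)
      (intervalIntegrable_const)
      (by
        refine Filter.Eventually.of_forall (fun θ => fun _ => ?_)
        have h := (htrans _ (hwr θ) z₀ hz₀ball).const_mul (A θ)
        exact h)
  -- the integral formula for pderivC on the ball
  have hrε : r ≤ ε := by rw [hrdef]; linarith
  have key : ∀ z ∈ ball z₀ r,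
      pderivC i g z
        = (2 * Real.pi * I : ℂ)⁻¹ * ∫ θ in (0:ℝ)..(2 * Real.pi), Fb z θ := by
    intro z hz
    set ψ : ℂ → ℂ := fun u => g (z + u • eI) with hψdef
    have hinner : ∀ u : ℂ, HasDerivAt (fun u : ℂ => z + u • eI) eI u := by
      intro u
      have h1 := (hasDerivAt_id u).smul_const eI
      rw [one_smul] at h1
      exact h1.const_add z
    have hψdiff : ∀ u ∈ Metric.closedBall (0:ℂ) r, DifferentiableAt ℂ ψ u := by
      intro u hu
      rw [mem_closedBall, dist_zero_right] at hu
      have hmemU : z + u • eI ∈ U := h3r (h2r (hmem2 z hz u hu))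
      exact ((hg.differentiableAt (hU.mem_nhds hmemU)).hasFDerivAt.comp_hasDerivAt u
        (hinner u)).differentiableAt
    have hψdc : DiffContOnCl ℂ ψ (ball (0:ℂ) r) := by
      apply DifferentiableOn.diffContOnCl
      rw [closure_ball _ hr.ne']
      exact fun u hu => (hψdiff u hu).differentiableWithinAt
    have hzU : z ∈ U := hball (ball_subset_ball hrε hz)
    have hd0 : HasDerivAt ψ (pderivC i g z) 0 := by
      have e0 : z + (0:ℂ) • eI = z := by simp
      have hgz : HasFDerivAt g (fderiv ℂ g z) (z + (0:ℂ) • eI) := by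
        rw [e0]
        exact (hg.differentiableAt (hU.mem_nhds hzU)).hasFDerivAt
      exact hgz.comp_hasDerivAt 0 (hinner 0)
    have hint : deriv ψ 0 = (2 * Real.pi * I : ℂ)⁻¹ • ∮ u in C(0, r), (u - 0) ^ (-2 : ℤ) • ψ u := by
      have h := DiffContOnCl.deriv_eq_smul_circleIntegral hr hψdc
      have hc : (2 * Real.pi * I : ℂ) ≠ 0 := by simp [Real.pi_ne_zero, I_ne_zero]
      rw [eq_inv_smul_iff₀ hc, ← h]
      simp only [zpow_neg, zpow_ofNat, one_div]
    rw [hd0.deriv] at hint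
    rw [hint, smul_eq_mul]
    congr 1
    unfold circleIntegral
    apply intervalIntegral.integral_congr
    intro θ _
    simp only [sub_zero, smul_eq_mul, hFbdef, hAdef, hψdef]
    ring
  have hdiffΦ : DifferentiableAt ℂ
      (fun z => (2 * Real.pi * I : ℂ)⁻¹ * ∫ θ in (0:ℝ)..(2 * Real.pi), Fb z θ) z₀ :=
    (main.2.differentiableAt).const_mul _
  have hev : pderivC i g =ᶠ[nhds z₀]
      fun z => (2 * Real.pi * I : ℂ)⁻¹ * ∫ θ in (0:ℝ)..(2 * Real.pi), Fb z θ :=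
    Filter.eventually_of_mem (Metric.ball_mem_nhds z₀ hr) key
  exact (hdiffΦ.congr_of_eventuallyEq hev).differentiableWithinAt

lemma exp_arith {S x t u r : ℝ} (hx2S : x^2 ≤ S) (hS : 0 ≤ S) (htx : |t - x| ≤ r)
    (hu : 0 ≤ u) (hu2 : u ≤ 1/2) (hr : 0 < r) (hr1 : r ≤ 1) :
    u * (S - x^2 + t^2) - (S - x^2 + t^2)/2 ≤ (u + r) * S - S/2 + 2*r := by
  have h1 : |t| ≤ |x| + r := by
    have h := abs_sub_abs_le_abs_sub t x
    linarith
  have h2 : |x| ≤ |t| + r := by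
    have h := abs_sub_abs_le_abs_sub x t
    rw [abs_sub_comm] at h
    linarith
  have hd1 : t^2 - x^2 ≤ 2*r*|x| + r^2 := by
    nlinarith [_root_.sq_abs t, _root_.sq_abs x, abs_nonneg x, abs_nonneg t]
  have hd2 : x^2 - t^2 ≤ 2*r*|x| + r^2 := by
    nlinarith [_root_.sq_abs t, _root_.sq_abs x, abs_nonneg x, abs_nonneg t]
  have h2x : 2*|x| ≤ 1 + x^2 := by
    nlinarith [_root_.sq_abs x, sq_nonneg (|x| - 1)]
  nlinarith [mul_le_mul_of_nonneg_left hd2 (by linarith : (0:ℝ) ≤ 1/2 - u),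
    mul_le_mul_of_nonneg_left hd1 hu,
    mul_le_mul_of_nonneg_left h2x hr.le, hx2S, hr.le, hr1, abs_nonneg x,
    mul_le_mul_of_nonneg_left hx2S hr.le]

/-- One Cauchy step on tubes, with Gaussian-type weights. -/
lemma step_bound {cc r u M d : ℝ} {g : (Fin l → ℂ) → ℂ}
    (hg : DifferentiableOn ℂ g (tube l cc))
    (hr : 0 < r) (hr1 : r ≤ 1) (hu : 0 ≤ u) (hu2 : u ≤ 1/2) (hM0 : 0 ≤ M)
    (hdc : d + r < cc)
    (hM : ∀ lam, timm lam ≤ d + r → ‖g lam‖ ≤ M * Real.exp (u * sre lam - sre lam / 2))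
    (i : Fin l) :
    ∀ lam, timm lam ≤ d →
      ‖pderivC i g lam‖ ≤ (M * Real.exp (2*r) / r) *
        Real.exp ((u + r) * sre lam - sre lam / 2) := by
  intro lam hlam
  have him : ∀ w : ℂ, dist w (lam i) ≤ r → |w.im - (lam i).im| ≤ r := by
    intro w hw
    have h := Complex.abs_im_le_norm (w - lam i)
    rw [Complex.sub_im] at h
    rw [Complex.dist_eq] at hw
    linarith
  have hre : ∀ w : ℂ, dist w (lam i) ≤ r → |w.re - (lam i).re| ≤ r := by
    intro w hw
    have h := Complex.abs_re_le_norm (w - lam i)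
    rw [Complex.sub_re] at h
    rw [Complex.dist_eq] at hw
    linarith
  have htup : ∀ w : ℂ, dist w (lam i) ≤ r → timm (Function.update lam i w) ≤ d + r := by
    intro w hw
    have h1 := timm_update_le lam i w
    have h2 := him w hw
    linarith
  have hmem : ∀ w : ℂ, dist w (lam i) ≤ r → Function.update lam i w ∈ tube l cc := by
    intro w hw
    exact mem_tube.mpr (lt_of_le_of_lt (htup w hw) hdc)
  have hbd : ∀ w : ℂ, dist w (lam i) ≤ r →
      ‖g (Function.update lam i w)‖ ≤
        (M * Real.exp (2*r)) * Real.exp ((u + r) * sre lam - sre lam / 2) := by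
    intro w hw
    have hb := hM _ (htup w hw)
    have hx2S : (lam i).re ^ 2 ≤ sre lam :=
      Finset.single_le_sum (fun j _ => sq_nonneg ((lam j).re)) (Finset.mem_univ i)
    have harith : u * sre (Function.update lam i w) - sre (Function.update lam i w) / 2
        ≤ (u + r) * sre lam - sre lam / 2 + 2*r := by
      rw [sre_update]
      exact exp_arith hx2S (sre_nonneg lam) (hre w hw) hu hu2 hr hr1
    calc ‖g (Function.update lam i w)‖
        ≤ M * Real.exp (u * sre (Function.update lam i w) - sre (Function.update lam i w) / 2) := hb
      _ ≤ M * Real.exp ((u + r) * sre lam - sre lam / 2 + 2*r) :=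
          mul_le_mul_of_nonneg_left (Real.exp_le_exp.mpr harith) hM0
      _ = (M * Real.exp (2*r)) * Real.exp ((u + r) * sre lam - sre lam / 2) := by
          rw [Real.exp_add]; ring
  have hcb := pderiv_bound isOpen_tube hg lam i hr hmem hbd
  calc ‖pderivC i g lam‖
      ≤ ((M * Real.exp (2*r)) * Real.exp ((u + r) * sre lam - sre lam / 2)) / r := hcb
    _ = (M * Real.exp (2*r) / r) * Real.exp ((u + r) * sre lam - sre lam / 2) := by ring

lemma list_bound {cc r M b : ℝ} {K : ℕ}
    (hr : 0 < r) (hr1 : r ≤ 1) (hKr : (K:ℝ) * r ≤ 1/2) (hM0 : 0 ≤ M)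
    (hbK : b + K * r < cc) :
    ∀ (L : List (Fin l)) (j : ℕ) (g : (Fin l → ℂ) → ℂ), L.length + j ≤ K →
    DifferentiableOn ℂ g (tube l cc) →
    (∀ lam, timm lam ≤ b + (j + L.length) * r →
      ‖g lam‖ ≤ M * Real.exp ((((K - (j + L.length) : ℕ) : ℝ) * r) * sre lam - sre lam / 2)) →
    (DifferentiableOn ℂ (L.foldr pderivC g) (tube l cc) ∧
     ∀ lam, timm lam ≤ b + j * r →
      ‖L.foldr pderivC g lam‖ ≤ M * (Real.exp (2*r) / r) ^ L.length *
        Real.exp ((((K - j : ℕ) : ℝ) * r) * sre lam - sre lam / 2)) := by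
  intro L
  induction L with
  | nil =>
    intro j g hlen hdiff hbound
    refine ⟨hdiff, fun lam hlam => ?_⟩
    have := hbound lam (by simpa using hlam)
    simpa using this
  | cons i L ih =>
    intro j g hlen hdiff hbound
    have hjK : j + 1 ≤ K := by
      simp only [List.length_cons] at hlen; omega
    have hLK : L.length + (j + 1) ≤ K := by
      simp only [List.length_cons] at hlen; omega
    have he : j + ((i :: L).length) = (j+1) + L.length := by
      simp [List.length_cons]; omega
    have hbound' : ∀ lam, timm lam ≤ b + ((((j+1):ℕ):ℝ) + (L.length:ℝ)) * r →
        ‖g lam‖ ≤ M * Real.exp ((((K - ((j+1) + L.length) : ℕ) : ℝ) * r) * sre lam - sre lam / 2) := by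
      intro lam hlam
      rw [← he]
      apply hbound
      have hc : ((j:ℝ) + (((i :: L).length : ℕ) : ℝ)) = (((j+1:ℕ)):ℝ) + ((L.length:ℕ):ℝ) := by
        simp [List.length_cons]; push_cast; ring
      rw [hc]
      exact hlam
    obtain ⟨hdiff', hbd'⟩ := ih (j+1) g hLK hdiff hbound'
    have hfold : (i :: L).foldr pderivC g = pderivC i (L.foldr pderivC g) := rfl
    constructor
    · rw [hfold]
      exact pderivC_differentiableOn isOpen_tube hdiff' i
    · intro lam hlam
      rw [hfold]
      set u : ℝ := ((K - (j+1) : ℕ) : ℝ) * r with hudef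
      have hu0 : 0 ≤ u := by positivity
      have hcast : ((K - j : ℕ) : ℝ) = ((K - (j+1) : ℕ) : ℝ) + 1 := by
        have : K - j = (K - (j+1)) + 1 := by omega
        rw [this]; push_cast; ring
      have hKj : ((K - j : ℕ) : ℝ) * r ≤ 1/2 := by
        have h1 : ((K - j : ℕ) : ℝ) ≤ (K : ℝ) := by
          exact_mod_cast Nat.sub_le K j
        nlinarith
      have hur : u + r = ((K - j : ℕ) : ℝ) * r := by
        rw [hudef, hcast]; ring
      have hu2 : u ≤ 1/2 := by
        have h := hKj
        rw [← hur] at h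
        linarith
      have hM'0 : 0 ≤ M * (Real.exp (2*r) / r) ^ L.length := by positivity
      have hdc : (b + j * r) + r < cc := by
        have h1 : ((j:ℝ) + 1) * r ≤ (K:ℝ) * r := by
          have : ((j:ℝ) + 1) ≤ (K:ℝ) := by exact_mod_cast hjK
          nlinarith
        nlinarith
      have hMstep : ∀ lam', timm lam' ≤ (b + j * r) + r →
          ‖L.foldr pderivC g lam'‖ ≤ (M * (Real.exp (2*r) / r) ^ L.length) *
            Real.exp (u * sre lam' - sre lam' / 2) := by
        intro lam' hlam'
        apply hbd'
        push_cast
        linarith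
      have := step_bound hdiff' hr hr1 hu0 hu2 hM'0 hdc hMstep i lam hlam
      rw [hur] at this
      calc ‖pderivC i (L.foldr pderivC g) lam‖
          ≤ (M * (Real.exp (2*r) / r) ^ L.length * Real.exp (2*r) / r) *
            Real.exp (((K - j : ℕ) : ℝ) * r * sre lam - sre lam / 2) := this
        _ = M * (Real.exp (2*r) / r) ^ (i :: L).length *
            Real.exp (((K - j : ℕ) : ℝ) * r * sre lam - sre lam / 2) := by
            rw [List.length_cons, pow_succ]; ring

lemma foldr_replicate (i : Fin l) (n : ℕ) (g : (Fin l → ℂ) → ℂ) :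
    (List.replicate n i).foldr pderivC g = (pderivC i)^[n] g := by
  induction n with
  | zero => simp
  | succ n ih =>
    rw [List.replicate_succ, List.foldr_cons, ih, Function.iterate_succ_apply']

lemma multiPderiv_eq_foldr (α : Fin l → ℕ) (g : (Fin l → ℂ) → ℂ) :
    multiPderiv α g = ((List.finRange l).flatMap fun i => List.replicate (α i) i).foldr pderivC g := by
  unfold multiPderiv
  induction (List.finRange l) with
  | nil => simp
  | cons i L ih =>
    rw [List.flatMap_cons, List.foldr_append, List.foldr_cons, ih, foldr_replicate]

lemma limit_differentiableOn {a c : ℝ} (hca : c < a)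
    {F : ℕ → (Fin l → ℂ) → ℂ} {f : (Fin l → ℂ) → ℂ}
    (hhol : ∀ n, DifferentiableOn ℂ (F n) (tube l a))
    (hconv : TendstoUniformlyOn F f Filter.atTop (tube l a)) :
    DifferentiableOn ℂ f (tube l c) := by
  set r' : ℝ := a - c with hr'def
  have hr' : 0 < r' := by rw [hr'def]; linarith
  have hUC : UniformCauchySeqOn F Filter.atTop (tube l a) := hconv.uniformCauchySeqOn
  have hdUC : UniformCauchySeqOn (fun n z => fderiv ℂ (F n) z) Filter.atTop (tube l c) := by
    rw [Metric.uniformCauchySeqOn_iff]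
    intro ε hε
    rw [Metric.uniformCauchySeqOn_iff] at hUC
    obtain ⟨N, hN⟩ := hUC (ε * r' / (2 * (l + 1))) (by positivity)
    refine ⟨N, fun m hm n hn z hz => ?_⟩
    have hGdiff : DifferentiableOn ℂ (fun x => F m x - F n x) (tube l a) :=
      (hhol m).sub (hhol n)
    have hmem : ∀ (i : Fin l) (w : ℂ), dist w (z i) ≤ r' →
        Function.update z i w ∈ tube l a := by
      intro i w hw
      have h1 := timm_update_le z i w
      have h2 : |w.im - (z i).im| ≤ r' := by
        have h := Complex.abs_im_le_norm (w - z i)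
        rw [Complex.sub_im] at h
        rw [Complex.dist_eq] at hw
        linarith
      have h3 : timm z < c := hz
      exact mem_tube.mpr (by rw [hr'def] at h2; linarith)
    have hMest : ∀ (i : Fin l) (w : ℂ), dist w (z i) ≤ r' →
        ‖(fun x => F m x - F n x) (Function.update z i w)‖ ≤ ε * r' / (2 * (l + 1)) := by
      intro i w hw
      have := hN m hm n hn _ (hmem i w hw)
      rw [dist_eq_norm] at this
      exact this.le
    have hbd := fderiv_norm_le isOpen_tube hGdiff hr' (by positivity) hmem hMest
      (tube_mono hca.le hz)
    have heq : fderiv ℂ (fun x => F m x - F n x) z = fderiv ℂ (F m) z - fderiv ℂ (F n) z := by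
      apply fderiv_sub
      · exact (hhol m).differentiableAt (isOpen_tube.mem_nhds (tube_mono hca.le hz))
      · exact (hhol n).differentiableAt (isOpen_tube.mem_nhds (tube_mono hca.le hz))
    rw [heq] at hbd
    rw [dist_eq_norm]
    calc ‖fderiv ℂ (F m) z - fderiv ℂ (F n) z‖ ≤ l * (ε * r' / (2 * (l + 1)) / r') := hbd
      _ = ε * (l / (2 * (l + 1))) := by field_simp
      _ < ε := by
          have h1 : (l:ℝ) / (2 * (l + 1)) < 1 := by
            rw [div_lt_one (by positivity)]
            have : (0:ℝ) ≤ (l:ℝ) := Nat.cast_nonneg l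
            linarith
          nlinarith
  have hptwise : ∀ z, z ∈ tube l c → ∃ L, Filter.Tendsto (fun n => fderiv ℂ (F n) z)
      Filter.atTop (nhds L) := by
    intro z hz
    apply cauchySeq_tendsto_of_complete
    rw [Metric.cauchySeq_iff]
    rw [Metric.uniformCauchySeqOn_iff] at hdUC
    intro ε hε
    obtain ⟨N, hN⟩ := hdUC ε hε
    exact ⟨N, fun m hm n hn => hN m hm n hn z hz⟩
  classical
  set g' : (Fin l → ℂ) → (Fin l → ℂ) →L[ℂ] ℂ :=
    fun z => if hz : z ∈ tube l c then (hptwise z hz).choose else 0 with hg'def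
  have hTU : TendstoUniformlyOn (fun n z => fderiv ℂ (F n) z) g' Filter.atTop (tube l c) := by
    apply hdUC.tendstoUniformlyOn_of_tendsto
    intro z hz
    rw [hg'def]
    simp only [hz, dif_pos]
    exact (hptwise z hz).choose_spec
  intro z hz
  have hd := hasFDerivAt_of_tendstoUniformlyOn isOpen_tube hTU
    (fun n x hx => ((hhol n).differentiableAt
      (isOpen_tube.mem_nhds (tube_mono hca.le hx))).hasFDerivAt)
    (fun x hx => hconv.tendsto_at (tube_mono hca.le hx)) hz
  exact hd.differentiableAt.differentiableWithinAt

lemma norm_gauss (z : Fin l → ℂ) :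
    ‖Complex.exp (-(∑ i, z i ^ 2) / 2)‖ = Real.exp ((simm z - sre z) / 2) := by
  rw [Complex.norm_exp]
  congr 1
  have hre : (∑ i, z i ^ 2).re = sre z - simm z := by
    rw [Complex.re_sum]
    unfold sre simm
    rw [← Finset.sum_sub_distrib]
    apply Finset.sum_congr rfl
    intro i _
    rw [sq, Complex.mul_re]
    ring
  have hdiv : (-(∑ i, z i ^ 2) / 2).re = -((∑ i, z i ^ 2).re) / 2 := by
    rw [Complex.div_re]
    simp [Complex.normSq_apply]
    ring
  rw [hdiv, hre]
  ring

lemma weight_bound {γ c0 S : ℝ} (hγ : 0 < γ) (hc0 : 0 ≤ c0) (hS : 0 ≤ S) (m : ℕ) :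
    (1 + c0 + S) ^ m * Real.exp (-(γ * S)) ≤ ((1 + c0) * (1 + (m + 1) / γ)) ^ m := by
  have hε0 : (0:ℝ) < γ / (m + 1) := by positivity
  set ε0 : ℝ := γ / (m + 1) with hε0def
  have hexp1 : (1:ℝ) ≤ Real.exp (ε0 * S) := Real.one_le_exp (by positivity)
  have hexp2 : ε0 * S + 1 ≤ Real.exp (ε0 * S) := Real.add_one_le_exp _
  have hA : 1 + S ≤ (1 + 1 / ε0) * Real.exp (ε0 * S) := by
    have hS' : S ≤ Real.exp (ε0 * S) / ε0 := by
      rw [le_div_iff₀ hε0]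
      nlinarith
    have heq : (1 + 1 / ε0) * Real.exp (ε0 * S) =
        Real.exp (ε0 * S) + Real.exp (ε0 * S) / ε0 := by
      field_simp
    nlinarith
  have hB : 1 + c0 + S ≤ (1 + c0) * (1 + S) := by nlinarith
  have hpos : (0:ℝ) ≤ 1 + c0 + S := by linarith
  have hstep : (1 + c0 + S) ^ m ≤ ((1 + c0) * (1 + 1 / ε0)) ^ m * Real.exp (ε0 * S) ^ m := by
    rw [← mul_pow]
    apply pow_le_pow_left₀ hpos
    calc 1 + c0 + S ≤ (1 + c0) * (1 + S) := hB
      _ ≤ (1 + c0) * ((1 + 1 / ε0) * Real.exp (ε0 * S)) :=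
          mul_le_mul_of_nonneg_left hA (by linarith)
      _ = (1 + c0) * (1 + 1 / ε0) * Real.exp (ε0 * S) := by ring
  have hfin : Real.exp (ε0 * S) ^ m * Real.exp (-(γ * S)) ≤ 1 := by
    rw [← Real.exp_nat_mul, ← Real.exp_add]
    rw [Real.exp_le_one_iff]
    have h1 : (m:ℝ) / (m + 1) ≤ 1 := by
      rw [div_le_one (by positivity)]
      linarith
    have h2 : (m:ℝ) * (ε0 * S) ≤ γ * S := by
      calc (m:ℝ) * (ε0 * S) = ((m:ℝ) / (m + 1)) * (γ * S) := by
            rw [hε0def]; field_simp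
        _ ≤ 1 * (γ * S) := mul_le_mul_of_nonneg_right h1 (by positivity)
        _ = γ * S := one_mul _
    linarith
  have hC : (0:ℝ) ≤ ((1 + c0) * (1 + 1 / ε0)) ^ m := by positivity
  have h1ε0 : 1 / ε0 = (m + 1) / γ := by
    rw [hε0def, one_div, inv_div]
  calc (1 + c0 + S) ^ m * Real.exp (-(γ * S))
      ≤ ((1 + c0) * (1 + 1 / ε0)) ^ m * Real.exp (ε0 * S) ^ m * Real.exp (-(γ * S)) :=
        mul_le_mul_of_nonneg_right hstep (Real.exp_nonneg _)
    _ = ((1 + c0) * (1 + 1 / ε0)) ^ m * (Real.exp (ε0 * S) ^ m * Real.exp (-(γ * S))) := by ring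
    _ ≤ ((1 + c0) * (1 + 1 / ε0)) ^ m * 1 := mul_le_mul_of_nonneg_left hfin hC
    _ = ((1 + c0) * (1 + (m + 1) / γ)) ^ m := by rw [mul_one, h1ε0]

end GW

set_option maxHeartbeats 2000000 in
/-- If `(f_n)` are holomorphic on `T_a`, uniformly bounded there, and converge
uniformly on `T_a` to `f`, then for every multi-index `α` and every `m ≥ 0`,
`sup_{‖Im λ‖ ≤ b} (1 + ‖λ‖²)^m · |∂^α (exp(−(λ₁²+⋯+λ_l²)/2) · (f_n(λ) − f(λ)))| → 0`
as `n → ∞`, for every `0 < b < a`. -/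
theorem gaussian_weighted_seminorm_convergence {l : ℕ} (hl : 1 ≤ l)
    {a b : ℝ} (hb : 0 < b) (hba : b < a)
    (F : ℕ → (Fin l → ℂ) → ℂ) (f : (Fin l → ℂ) → ℂ)
    (hhol : ∀ n, DifferentiableOn ℂ (F n) (tube l a))
    (hbdd : ∃ C : ℝ, ∀ n, ∀ lam ∈ tube l a, ‖F n lam‖ ≤ C)
    (hconv : TendstoUniformlyOn F f Filter.atTop (tube l a)) :
    ∀ (α : Fin l → ℕ) (m : ℕ), ∀ ε > (0 : ℝ), ∃ N : ℕ, ∀ n ≥ N,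
      ∀ lam : Fin l → ℂ, Real.sqrt (∑ i, (lam i).im ^ 2) ≤ b →
        (1 + ∑ i, ‖lam i‖ ^ 2) ^ m *
          ‖multiPderiv α
            (fun z => Complex.exp (-(∑ i, z i ^ 2) / 2) * (F n z - f z)) lam‖ < ε := by
  intro α m ε hε
  classical
  set c : ℝ := (a + b) / 2 with hcdef
  have hbc : b < c := by rw [hcdef]; linarith
  have hca : c < a := by rw [hcdef]; linarith
  have hc0 : 0 < c := by linarith
  have hfdiff : DifferentiableOn ℂ f (tube l c) := GW.limit_differentiableOn hca hhol hconv
  set L : List (Fin l) := (List.finRange l).flatMap (fun i => List.replicate (α i) i) with hLdef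
  set K : ℕ := L.length with hKdef
  set r : ℝ := min ((c - b) / (K + 1)) (1 / (2 * (K + 1))) with hrdef
  have hrle2 : r ≤ 1 / (2 * (K + 1)) := min_le_right _ _
  have hrle1 : r ≤ (c - b) / (K + 1) := min_le_left _ _
  have hK0 : (0:ℝ) ≤ (K:ℝ) := Nat.cast_nonneg K
  have hr : 0 < r := by
    apply lt_min
    · exact div_pos (by linarith) (by positivity)
    · positivity
  have hr1 : r ≤ 1 := by
    have h2 : (1:ℝ) / (2 * (K + 1)) ≤ 1 := by
      rw [div_le_one (by positivity)]
      linarith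
    linarith
  have hKr : (K:ℝ) * r ≤ 1 / 2 := by
    have h1 : (K:ℝ) * r ≤ (K:ℝ) * (1 / (2 * (K + 1))) := mul_le_mul_of_nonneg_left hrle2 hK0
    have h2 : (K:ℝ) * (1 / (2 * (K + 1))) ≤ 1 / 2 := by
      rw [mul_one_div, div_le_div_iff₀ (by positivity) (by norm_num)]
      linarith
    linarith
  set γ : ℝ := 1 / 2 - (K:ℝ) * r with hγdef
  have hγ : 0 < γ := by
    have h1 : (K:ℝ) * r ≤ (K:ℝ) * (1 / (2 * (K + 1))) := mul_le_mul_of_nonneg_left hrle2 hK0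
    have h2 : (K:ℝ) * (1 / (2 * (K + 1))) < 1 / 2 := by
      rw [mul_one_div, div_lt_div_iff₀ (by positivity) (by norm_num)]
      linarith
    rw [hγdef]; linarith
  have hbK : b + (K:ℝ) * r < c := by
    have h1 : (K:ℝ) * r ≤ (K:ℝ) * ((c - b) / (K + 1)) := mul_le_mul_of_nonneg_left hrle1 hK0
    have h2 : (K:ℝ) * ((c - b) / (K + 1)) < c - b := by
      rw [mul_div_assoc', div_lt_iff₀ (by positivity)]
      nlinarith
    linarith
  set Q : ℝ := Real.exp (c ^ 2 / 2) * (Real.exp (2 * r) / r) ^ K *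
    ((1 + b ^ 2) * (1 + (m + 1) / γ)) ^ m with hQdef
  have hQ0 : 0 < Q := by rw [hQdef]; positivity
  set ε' : ℝ := ε / (Q + 1) with hε'def
  have hε' : 0 < ε' := by rw [hε'def]; positivity
  rw [Metric.tendstoUniformlyOn_iff] at hconv
  obtain ⟨N, hN⟩ := Filter.eventually_atTop.mp (hconv ε' hε')
  refine ⟨N, fun n hn lam hlam => ?_⟩
  set g : (Fin l → ℂ) → ℂ := fun z => Complex.exp (-(∑ i, z i ^ 2) / 2) * (F n z - f z) with hgdef
  have hpoly : Differentiable ℂ (fun z : Fin l → ℂ => -(∑ i, z i ^ 2) / 2) := by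
    have hsd : Differentiable ℂ (fun z : Fin l → ℂ => ∑ i, z i ^ 2) := by
      apply Differentiable.fun_sum
      intro i _
      have hproj : Differentiable ℂ (fun z : Fin l → ℂ => z i) :=
        (ContinuousLinearMap.proj i : (Fin l → ℂ) →L[ℂ] ℂ).differentiable
      exact hproj.pow 2
    have heq2 : (fun z : Fin l → ℂ => -(∑ i, z i ^ 2) / 2)
        = fun z : Fin l → ℂ => (-2⁻¹ : ℂ) * ∑ i, z i ^ 2 := by
      funext z; ring
    rw [heq2]
    exact hsd.const_mul _
  have hgauss : Differentiable ℂ (fun z : Fin l → ℂ => Complex.exp (-(∑ i, z i ^ 2) / 2)) :=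
    hpoly.cexp
  have hgdiff : DifferentiableOn ℂ g (tube l c) := by
    apply DifferentiableOn.mul hgauss.differentiableOn
    exact ((hhol n).mono (GW.tube_mono hca.le)).sub hfdiff
  set M : ℝ := ε' * Real.exp (c ^ 2 / 2) with hMdef
  have hM0 : 0 ≤ M := by positivity
  have hbound : ∀ lam', GW.timm lam' ≤ b + (((0:ℕ):ℝ) + ((L.length : ℕ):ℝ)) * r →
      ‖g lam'‖ ≤ M * Real.exp ((((K - (0 + L.length) : ℕ) : ℝ) * r) * GW.sre lam'
        - GW.sre lam' / 2) := by
    intro lam' hlam'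
    have h0 : ((K - (0 + L.length) : ℕ) : ℝ) = 0 := by
      rw [hKdef]; simp
    rw [h0]
    simp only [zero_mul, zero_sub]
    have htm : GW.timm lam' ≤ b + (K:ℝ) * r := by
      have : (((0:ℕ):ℝ) + ((L.length : ℕ):ℝ)) = (K:ℝ) := by rw [hKdef]; simp
      rw [this] at hlam'
      exact hlam'
    have hmemA : lam' ∈ tube l a := GW.mem_tube.mpr (by linarith)
    have hdist : ‖F n lam' - f lam'‖ ≤ ε' := by
      have := hN n hn lam' hmemA
      rw [dist_comm, dist_eq_norm] at this
      exact this.le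
    have hsimm : GW.simm lam' ≤ c ^ 2 := by
      rw [← GW.sq_timm]
      have htc : GW.timm lam' ≤ c := by linarith
      exact pow_le_pow_left₀ (GW.timm_nonneg lam') htc 2
    calc ‖g lam'‖ = ‖Complex.exp (-(∑ i, lam' i ^ 2) / 2)‖ * ‖F n lam' - f lam'‖ := by
          rw [hgdef]; exact norm_mul _ _
      _ = Real.exp ((GW.simm lam' - GW.sre lam') / 2) * ‖F n lam' - f lam'‖ := by
          rw [GW.norm_gauss]
      _ ≤ Real.exp ((c ^ 2 - GW.sre lam') / 2) * ε' := by
          apply mul_le_mul ?_ hdist (norm_nonneg _) (Real.exp_nonneg _)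
          apply Real.exp_le_exp.mpr
          linarith
      _ = M * Real.exp (-(GW.sre lam' / 2)) := by
          rw [hMdef, mul_assoc, ← Real.exp_add, mul_comm]
          congr 1
          ring
  have hlen : L.length + 0 ≤ K := by rw [hKdef]; omega
  obtain ⟨_, hfinal⟩ := GW.list_bound hr hr1 hKr hM0 hbK L 0 g hlen hgdiff hbound
  have hlam' : GW.timm lam ≤ b + ((0:ℕ):ℝ) * r := by
    have : GW.timm lam ≤ b := hlam
    simpa using this
  have hres := hfinal lam hlam'
  rw [Nat.sub_zero] at hres
  have hsum : ∑ i, ‖lam i‖ ^ 2 = GW.sre lam + GW.simm lam := by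
    unfold GW.sre GW.simm
    rw [← Finset.sum_add_distrib]
    apply Finset.sum_congr rfl
    intro i _
    have h1 := Complex.sq_norm (lam i)
    rw [Complex.normSq_apply] at h1
    rw [h1]
    ring
  have hsimmb : GW.simm lam ≤ b ^ 2 := by
    rw [← GW.sq_timm]
    exact pow_le_pow_left₀ (GW.timm_nonneg lam) hlam 2
  have hS0 : 0 ≤ GW.sre lam := GW.sre_nonneg lam
  have hsumnn : 0 ≤ ∑ i, ‖lam i‖ ^ 2 := Finset.sum_nonneg fun i _ => sq_nonneg _
  have hw1 : (1 + ∑ i, ‖lam i‖ ^ 2) ≤ 1 + b ^ 2 + GW.sre lam := by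
    rw [hsum]; linarith
  have hwpow : (1 + ∑ i, ‖lam i‖ ^ 2) ^ m ≤ (1 + b ^ 2 + GW.sre lam) ^ m :=
    pow_le_pow_left₀ (by linarith) hw1 m
  have hexpeq : ((K:ℝ)) * r * GW.sre lam - GW.sre lam / 2 = -(γ * GW.sre lam) := by
    rw [hγdef]; ring
  have hmp : multiPderiv α g = L.foldr pderivC g := GW.multiPderiv_eq_foldr α g
  calc (1 + ∑ i, ‖lam i‖ ^ 2) ^ m * ‖multiPderiv α g lam‖
      ≤ (1 + b ^ 2 + GW.sre lam) ^ m *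
        (M * (Real.exp (2 * r) / r) ^ K * Real.exp (-(γ * GW.sre lam))) := by
        apply mul_le_mul hwpow ?_ (norm_nonneg _) (by positivity)
        rw [hmp, ← hexpeq]
        exact hres
    _ = (M * (Real.exp (2 * r) / r) ^ K) *
        ((1 + b ^ 2 + GW.sre lam) ^ m * Real.exp (-(γ * GW.sre lam))) := by ring
    _ ≤ (M * (Real.exp (2 * r) / r) ^ K) * ((1 + b ^ 2) * (1 + (m + 1) / γ)) ^ m := by
        apply mul_le_mul_of_nonneg_left (GW.weight_bound hγ (by positivity) hS0 m) (by positivity)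
    _ = ε' * Q := by rw [hMdef, hQdef]; ring
    _ < ε := by
        rw [hε'def, div_mul_eq_mul_div, div_lt_iff₀ (by positivity)]
        nlinarith
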